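/- Let φ : K → L be a strong covering of finite simplicial complexes with L (n+1)-path connected. Then: (i) every eigenvalue of the combinatorial up-Laplacian L^{up}_n(L) (unit weights) is an eigenvalue of L^{up}_n(K); and (ii) every eigenvalue of the normalized up-Laplacian Δ^{up}_n(L) is an eigenvalue of Δ^{up}_n(K). -/

import Mathlib

variable {α : Type*} [LinearOrder α]

/-- inversion count, recursive -/
def invc : List α → ℕ
  | [] => 0
  | x :: t => (t.countP (fun y => decide (y < x))) + invc t

def invF (l : List α) : ℕ :=
  (Finset.univ.filter
    (fun p : Fin l.length × Fin l.length => p.1 < p.2 ∧ l.get p.2 < l.get p.1)).card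

lemma countP_eq_sum (t : List α) (p : α → Prop) [DecidablePred p] :
    t.countP (fun y => decide (p y)) = ∑ q : Fin t.length, if p (t.get q) then 1 else 0 := by
  induction t with
  | nil => simp
  | cons x t ih =>
    show _ = ∑ q : Fin (t.length + 1), if p ((x :: t).get q) then 1 else 0
    rw [List.countP_cons, Fin.sum_univ_succ, ih]
    simp [add_comm]
    congr

lemma invF_eq_invc (l : List α) : invF l = invc l := by
  induction l with
  | nil => rfl
  | cons x t ih =>
    rw [invF, Finset.card_filter, Fintype.sum_prod_type]
    show (∑ p1 : Fin (t.length+1), ∑ p2 : Fin (t.length+1),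
      if p1 < p2 ∧ (x :: t).get p2 < (x :: t).get p1 then 1 else 0) = _
    rw [Fin.sum_univ_succ]
    have h1 : ∑ p2 : Fin (t.length + 1),
        (if (0 : Fin (t.length+1)) < p2 ∧ (x :: t).get p2 < (x :: t).get (0 : Fin (t.length+1)) then 1 else 0)
        = t.countP (fun y => decide (y < x)) := by
      rw [Fin.sum_univ_succ, countP_eq_sum t (fun y => y < x)]
      simp [Fin.succ_pos]
    have h2 : ∀ p1 : Fin t.length, ∑ p2 : Fin (t.length + 1),
        (if p1.succ < p2 ∧ (x :: t).get p2 < (x :: t).get p1.succ then 1 else 0)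
        = ∑ p2 : Fin t.length, (if p1 < p2 ∧ t.get p2 < t.get p1 then 1 else 0) := by
      intro p1
      rw [Fin.sum_univ_succ]
      simp [Fin.succ_lt_succ_iff, Fin.not_lt_zero]
    rw [h1]
    simp only [h2]
    rw [invc, ← ih, invF, Finset.card_filter, Fintype.sum_prod_type]

lemma invc_erase [DecidableEq α] (l : List α) (hl : l.Nodup) (v : α) (hv : v ∈ l) :
    ((-1:ℝ)) ^ invc l =
      (-1) ^ (l.idxOf v) * (-1) ^ (l.countP (fun y => decide (y < v)))
        * (-1) ^ (invc (l.erase v)) := by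
  induction l with
  | nil => cases hv
  | cons x t ih =>
    have hxt : x ∉ t := (List.nodup_cons.1 hl).1
    have htn : t.Nodup := (List.nodup_cons.1 hl).2
    rcases List.mem_cons.1 hv with h | h
    · subst h
      rw [List.erase_cons_head, List.idxOf_cons_self, invc, List.countP_cons]
      simp [pow_add, mul_comm]
    · have hx : x ≠ v := by rintro rfl; exact hxt h
      have hperm : t.Perm (v :: t.erase v) := List.perm_cons_erase h
      have hA : t.countP (fun y => decide (y < x))
          = (t.erase v).countP (fun y => decide (y < x)) + (if v < x then 1 else 0) := by
        rw [hperm.countP_eq, List.countP_cons]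
        simp [add_comm]
      rw [List.erase_cons_tail (by simp [hx]), List.idxOf_cons_ne _ (by simp [hx]),
        invc, invc, List.countP_cons, hA]
      rcases lt_or_gt_of_ne hx with hlt | hlt
      · have h1 : (if v < x then (1:ℕ) else 0) = 0 := if_neg (not_lt.2 hlt.le)
        have h2 : (if decide (x < v) = true then (1:ℕ) else 0) = 1 := by simp [hlt]
        rw [h1, h2]
        simp only [pow_add, Nat.succ_eq_add_one, ih htn h, pow_one, pow_zero]
        ring
      · have h1 : (if v < x then (1:ℕ) else 0) = 1 := if_pos hlt
        have h2 : (if decide (x < v) = true then (1:ℕ) else 0) = 0 := by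
          simp [not_lt.2 hlt.le]
        rw [h1, h2]
        simp only [pow_add, Nat.succ_eq_add_one, ih htn h, pow_one, pow_zero]
        ring

lemma indexOf_sorted [DecidableEq α] (M : List α) (hM : M.Pairwise (· < ·)) (x : α)
    (hx : x ∈ M) : M.idxOf x = M.countP (fun y => decide (y < x)) := by
  induction M with
  | nil => cases hx
  | cons y t ih =>
    have hyt := (List.pairwise_cons.1 hM).1
    have htl := (List.pairwise_cons.1 hM).2
    rcases eq_or_ne y x with rfl | hne
    · rw [List.idxOf_cons_self, List.countP_cons]
      have h0 : t.countP (fun z => decide (z < y)) = 0 := by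
        rw [List.countP_eq_zero]
        intro z hz
        simp [not_lt.2 (hyt z hz).le]
      simp [h0]
    · have hxt : x ∈ t := by
        rcases List.mem_cons.1 hx with h | h
        · exact absurd h.symm hne
        · exact h
      rw [List.idxOf_cons_ne _ hne, List.countP_cons, ih htl hxt]
      simp [hyt x hxt]

lemma sort_erase [DecidableEq α] (s : Finset α) (v : α) :
    (s.erase v).sort (· ≤ ·) = (s.sort (· ≤ ·)).erase v := by
  refine List.Perm.eq_of_pairwise' (Finset.pairwise_sort _ _)
    (List.Pairwise.sublist List.erase_sublist (Finset.pairwise_sort _ _)) ?_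
  rw [← Multiset.coe_eq_coe, ← Multiset.coe_erase, Finset.sort_eq, Finset.sort_eq,
    Finset.erase_val]

/-- A finite abstract simplicial complex on vertex set `Fin m`:
a collection of nonempty finite vertex sets closed under taking nonempty subsets. -/
def IsComplex {m : ℕ} (K : Finset (Finset (Fin m))) : Prop :=
  (∀ s ∈ K, s.Nonempty) ∧ ∀ s ∈ K, ∀ t, t ⊆ s → t.Nonempty → t ∈ K

/-- The `n`-dimensional faces (simplices with `n+1` vertices) of `K`. -/
def faces {m : ℕ} (K : Finset (Finset (Fin m))) (n : ℕ) : Finset (Finset (Fin m)) :=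
  K.filter fun s => s.card = n + 1

/-- The incidence sign `(-1)^i` where `i` is the position of vertex `v` in the
canonically (increasingly) ordered vertex list of the simplex `s`. -/
def incSign {m : ℕ} (s : Finset (Fin m)) (v : Fin m) : ℝ :=
  (-1 : ℝ) ^ ((s.sort (· ≤ ·)).idxOf v)

/-- Simplicial coboundary with respect to canonical orientations:
`(δ f)([v₀,…,v_{n+1}]) = Σᵢ (-1)ⁱ f([v₀,…,v̂ᵢ,…,v_{n+1}])`. -/
def coboundary {m : ℕ} (f : Finset (Fin m) → ℝ) (s : Finset (Fin m)) : ℝ :=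
  ∑ v ∈ s, incSign s v * f (s.erase v)

/-- The weighted up-Laplacian `L^{up}_n = δ_n^* δ_n` on `n`-cochains, where the formal
adjoint `δ_n^*` is taken with respect to the weighted inner products
`(f,g) = Σ_F w(F) f(F) g(F)` and is extended by zero on simplices of weight zero. -/
noncomputable def upLap {m : ℕ} (K : Finset (Finset (Fin m))) (w : Finset (Fin m) → ℝ) (n : ℕ)
    (f : Finset (Fin m) → ℝ) (F : Finset (Fin m)) : ℝ :=
  if w F = 0 then 0 else
    (w F)⁻¹ * ∑ s ∈ (faces K (n + 1)).filter (fun s => F ⊆ s),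
      w s * (∑ v ∈ s \ F, incSign s v) * coboundary f s

/-- `lam : Fin N → ℝ` is the non-decreasing enumeration (with multiplicity) of the
eigenvalues of the weighted up-Laplacian `L^{up}_n(K, w)` acting on `C^n(K, ℝ)`:
there is a linearly independent eigenbasis realizing these eigenvalues. -/
def eigenseq {m : ℕ} (K : Finset (Finset (Fin m))) (w : Finset (Fin m) → ℝ) (n : ℕ)
    {N : ℕ} (lam : Fin N → ℝ) : Prop :=
  Monotone lam ∧ N = (faces K n).card ∧
    ∃ f : Fin N → (Finset (Fin m) → ℝ),
      LinearIndependent ℝ f ∧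
      (∀ i F, F ∉ faces K n → f i F = 0) ∧
      (∀ i F, F ∈ faces K n → upLap K w n (f i) F = lam i * f i F)

/-- Extension of a finite eigenvalue sequence `lam : Fin N → ℝ` to integer indices,
by `lo` for indices `≤ 0` and by `hi` for indices `> N`. -/
def extSeq {N : ℕ} (lam : Fin N → ℝ) (lo hi : ℝ) (j : ℤ) : ℝ :=
  if h : 1 ≤ j ∧ j ≤ (N : ℤ) then lam ⟨(j - 1).toNat, by omega⟩
  else if j ≤ 0 then lo else hi

/-- The orientation sign of the image of the simplex `F` under the vertex map `φ`,
with respect to canonical (increasing) orderings: `0` if the image is degenerate,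
otherwise the sign of the permutation sorting the image list. -/
def mapSign {a b : ℕ} (φ : Fin a → Fin b) (F : Finset (Fin a)) : ℝ :=
  let l : List (Fin b) := (F.sort (· ≤ ·)).map φ
  if l.Nodup then
    (-1 : ℝ) ^ (Finset.univ.filter
      (fun p : Fin l.length × Fin l.length => p.1 < p.2 ∧ l.get p.2 < l.get p.1)).card
  else 0

/-- The cochain map induced by a vertex map `φ`:
`(φ g)([v₀,…,v_n]) = g([φ(v₀),…,φ(v_n)])` (zero on degenerate images). -/
noncomputable def pullback {a b : ℕ} (φ : Fin a → Fin b) (g : Finset (Fin b) → ℝ)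
    (F : Finset (Fin a)) : ℝ :=
  mapSign φ F * g (F.image φ)

/-- The formal adjoint `φ^*` of the induced cochain map with respect to the
weighted inner products on `C^n(K, w_K)` and `C^n(L, w_L)`. -/
noncomputable def pushforward {a b : ℕ} (φ : Fin a → Fin b) (K : Finset (Finset (Fin a)))
    (wK : Finset (Fin a) → ℝ) (wL : Finset (Fin b) → ℝ) (n : ℕ)
    (f : Finset (Fin a) → ℝ) (G : Finset (Fin b)) : ℝ :=
  if wL G = 0 then 0 else
    (wL G)⁻¹ * ∑ F ∈ (faces K n).filter (fun F => F.image φ = G),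
      wK F * mapSign φ F * f F

/-- `φ` is a simplicial covering map from `K` to `L`: it is simplicial, and the preimage of
every simplex of `L` is a (nonempty) union of pairwise disjoint simplices of `K`, each of
which is mapped bijectively onto it. -/
def IsCovering {a b : ℕ} (φ : Fin a → Fin b) (K : Finset (Finset (Fin a)))
    (L : Finset (Finset (Fin b))) : Prop :=
  (∀ s ∈ K, s.image φ ∈ L) ∧
  ∀ G ∈ L, (∃ F ∈ K, F.image φ = G) ∧
    (∀ F ∈ K, F.image φ = G → F.card = G.card) ∧
    ∀ F ∈ K, ∀ F' ∈ K, F.image φ = G → F'.image φ = G → F ≠ F' → Disjoint F F'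

/-- The strong covering condition in dimension `n`: for every `(n+1)`-simplex `Gb` of `L`
with facet `G`, and every `F` in the fiber over `G`, there is an `(n+1)`-simplex `Fb` of
`K` containing `F` with `φ(Fb) = Gb`. -/
def StrongAt {a b : ℕ} (φ : Fin a → Fin b) (K : Finset (Finset (Fin a)))
    (L : Finset (Finset (Fin b))) (n : ℕ) : Prop :=
  ∀ Gb ∈ faces L (n + 1), ∀ G ∈ faces L n, G ⊆ Gb →
    ∀ F ∈ faces K n, F.image φ = G →
      ∃ Fb ∈ faces K (n + 1), F ⊆ Fb ∧ Fb.image φ = Gb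

/-- `L` is `(n+1)`-path connected: any two `(n+1)`-simplices are joined by a chain of
`(n+1)`-simplices in which consecutive ones are `n`-down neighbours (share an `n`-face). -/
def UpConn {b : ℕ} (L : Finset (Finset (Fin b))) (n : ℕ) : Prop :=
  ∀ s ∈ faces L (n + 1), ∀ t ∈ faces L (n + 1),
    Relation.ReflTransGen (fun x y => y ∈ faces L (n + 1) ∧ (x ∩ y).card = n + 1) s t

/-- `μ` is an eigenvalue of the weighted up-Laplacian `L^{up}_n(K, w)`. -/
def IsUpEig {m : ℕ} (K : Finset (Finset (Fin m))) (w : Finset (Fin m) → ℝ) (n : ℕ)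
    (μ : ℝ) : Prop :=
  ∃ g : Finset (Fin m) → ℝ, g ≠ 0 ∧ (∀ F, F ∉ faces K n → g F = 0) ∧
    ∀ F ∈ faces K n, upLap K w n g F = μ * g F

/-- The normalizing weight function: weight `1` on `(n+1)`-simplices and the degree
(number of `(n+1)`-cofaces) on lower simplices. -/
def normWeight {m : ℕ} (K : Finset (Finset (Fin m))) (n : ℕ) (F : Finset (Fin m)) : ℝ :=
  if F.card = n + 2 then 1
  else (((faces K (n + 1)).filter fun s => F ⊆ s).card : ℝ)


lemma indexOf_map_injOnList {α β : Type*} [DecidableEq α] [DecidableEq β] (f : α → β)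
    (l : List α) (hnd : (l.map f).Nodup) (v : α) (hv : v ∈ l) :
    (l.map f).idxOf (f v) = l.idxOf v := by
  induction l with
  | nil => cases hv
  | cons x t ih =>
    rcases eq_or_ne x v with rfl | hne
    · simp [List.idxOf_cons_self]
    · have hfx : f x ≠ f v := by
        intro he
        have hvt : v ∈ t := by
          rcases List.mem_cons.1 hv with h | h
          · exact absurd h.symm hne
          · exact h
        exact (List.nodup_cons.1 hnd).1 (he ▸ List.mem_map_of_mem (f := f) hvt)
      have hvt : v ∈ t := by
        rcases List.mem_cons.1 hv with h | h
        · exact absurd h.symm hne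
        · exact h
      rw [List.map_cons, List.idxOf_cons_ne _ hfx, List.idxOf_cons_ne _ hne,
        ih (List.nodup_cons.1 hnd).2 hvt]

lemma map_eraseIdx {α β : Type*} (f : α → β) :
    ∀ (l : List α) (i : ℕ), (l.eraseIdx i).map f = (l.map f).eraseIdx i
  | [], _ => by simp
  | _ :: _, 0 => rfl
  | x :: t, (i+1) => by
    simp only [List.eraseIdx_cons_succ, List.map_cons]
    rw [map_eraseIdx f t i]

lemma key_sign {a b : ℕ} (φ : Fin a → Fin b) (s : Finset (Fin a))
    (hnd : ((s.sort (· ≤ ·)).map φ).Nodup) (v : Fin a) (hv : v ∈ s) :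
    mapSign φ s = incSign s v * incSign (s.image φ) (φ v) * mapSign φ (s.erase v) := by
  set l := s.sort (· ≤ ·) with hl
  set Lm := l.map φ with hLm
  have hvl : v ∈ l := (Finset.mem_sort _).2 hv
  have hfv : φ v ∈ Lm := List.mem_map_of_mem (f := φ) hvl
  -- erased list
  have herase : ((s.erase v).sort (· ≤ ·)).map φ = Lm.erase (φ v) := by
    rw [sort_erase, List.erase_eq_eraseIdx_of_idxOf rfl, List.erase_eq_eraseIdx_of_idxOf rfl,
      indexOf_map_injOnList φ l hnd v hvl, ← hl, map_eraseIdx]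
  have hnd2 : (((s.erase v).sort (· ≤ ·)).map φ).Nodup := by
    rw [herase]; exact hnd.erase _
  -- countP equality via perm with sorted image list
  have hcoe : (Multiset.map φ s.val) = (Lm : Multiset (Fin b)) := by
    rw [hLm, ← Multiset.map_coe, hl, Finset.sort_eq]
  have hperm : ((s.image φ).sort (· ≤ ·)).Perm Lm := by
    apply Multiset.coe_eq_coe.1
    rw [Finset.sort_eq, Finset.image_val, Multiset.dedup_eq_self.2 (by
      rw [hcoe]; exact Multiset.coe_nodup.2 hnd), hcoe]
  have hM : φ v ∈ (s.image φ).sort (· ≤ ·) :=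
    (Finset.mem_sort _).2 (Finset.mem_image_of_mem φ hv)
  have e1 : mapSign φ s = (-1:ℝ) ^ (invF Lm) := by
    simp only [mapSign, invF]
    rw [if_pos hnd]
  have e3 : mapSign φ (s.erase v) = (-1:ℝ) ^ (invc (Lm.erase (φ v))) := by
    simp only [mapSign, invF]
    rw [herase, if_pos (hnd.erase _), ← invF_eq_invc]
    rfl
  have e2 : Lm.countP (fun y => decide (y < φ v))
      = ((s.image φ).sort (· ≤ ·)).idxOf (φ v) := by
    rw [indexOf_sorted _ (Finset.sortedLT_sort _).pairwise _ hM, hperm.countP_eq]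
  simp only [incSign]
  rw [e1, e3, invF_eq_invc, invc_erase Lm hnd (φ v) hfv,
    indexOf_map_injOnList φ l hnd v hvl, e2]

section Main

variable {a b n : ℕ} {φ : Fin a → Fin b} {K : Finset (Finset (Fin a))}
  {L : Finset (Finset (Fin b))}

lemma mem_faces' {m : ℕ} {K : Finset (Finset (Fin m))} {k : ℕ} {F : Finset (Fin m)} :
    F ∈ faces K k ↔ F ∈ K ∧ F.card = k + 1 := Finset.mem_filter

lemma card_image_eq (hcov : IsCovering φ K L) {F : Finset (Fin a)} (hF : F ∈ K) :
    (F.image φ).card = F.card :=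
  ((hcov.2 _ (hcov.1 F hF)).2.1 F hF rfl).symm

lemma injOn_simplex (hcov : IsCovering φ K L) {F : Finset (Fin a)} (hF : F ∈ K) :
    Set.InjOn φ ↑F :=
  Finset.injOn_of_card_image_eq (card_image_eq hcov hF)

lemma nodup_map_sort (hcov : IsCovering φ K L) {F : Finset (Fin a)} (hF : F ∈ K) :
    ((F.sort (· ≤ ·)).map φ).Nodup :=
  (Finset.sort_nodup F _).map_on (fun x hx y hy hxy =>
    injOn_simplex hcov hF ((Finset.mem_sort _).1 hx) ((Finset.mem_sort _).1 hy) hxy)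

lemma mapSign_ne_zero {F : Finset (Fin a)} (hnd : ((F.sort (· ≤ ·)).map φ).Nodup) :
    mapSign φ F ≠ 0 := by
  simp only [mapSign]
  rw [if_pos hnd]
  exact pow_ne_zero _ (by norm_num)

lemma mapSign_sq {F : Finset (Fin a)} (hnd : ((F.sort (· ≤ ·)).map φ).Nodup) :
    mapSign φ F * mapSign φ F = 1 := by
  simp only [mapSign]
  rw [if_pos hnd, ← pow_add]
  exact Even.neg_one_pow ⟨_, rfl⟩

lemma incSign_sq {m : ℕ} (s : Finset (Fin m)) (v : Fin m) :
    incSign s v * incSign s v = 1 := by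
  simp only [incSign]
  rw [← pow_add]
  exact Even.neg_one_pow ⟨_, rfl⟩

lemma image_erase_injOn {s : Finset (Fin a)} (hinj : Set.InjOn φ ↑s) {v : Fin a}
    (hv : v ∈ s) : (s.erase v).image φ = (s.image φ).erase (φ v) := by
  ext w
  simp only [Finset.mem_image, Finset.mem_erase]
  constructor
  · rintro ⟨u, ⟨hune, hus⟩, rfl⟩
    exact ⟨fun he => hune (hinj hus hv he), u, hus, rfl⟩
  · rintro ⟨hne, u, hus, rfl⟩
    exact ⟨u, ⟨fun he => hne (he ▸ rfl), hus⟩, rfl⟩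

lemma coboundary_pull (hK : IsComplex K) (hcov : IsCovering φ K L)
    {s : Finset (Fin a)} (hs : s ∈ faces K (n + 1))
    (g : Finset (Fin b) → ℝ) (f : Finset (Fin a) → ℝ)
    (hf : ∀ E ∈ faces K n, f E = mapSign φ E * g (E.image φ)) :
    coboundary f s = mapSign φ s * coboundary g (s.image φ) := by
  obtain ⟨hsK, hcard⟩ := mem_faces'.1 hs
  have hinj := injOn_simplex hcov hsK
  have hnd := nodup_map_sort hcov hsK
  have herase_mem : ∀ u ∈ s, s.erase u ∈ faces K n := by
    intro u hu
    refine mem_faces'.2 ⟨hK.2 s hsK _ (Finset.erase_subset _ _) ?_, ?_⟩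
    · rw [← Finset.card_pos, Finset.card_erase_of_mem hu, hcard]
      omega
    · rw [Finset.card_erase_of_mem hu, hcard]
      omega
  rw [coboundary, coboundary, Finset.mul_sum]
  refine Finset.sum_bij (fun u _ => φ u) ?_ ?_ ?_ ?_
  · intro u hu
    exact Finset.mem_image_of_mem φ hu
  · intro u hu u' hu' he
    exact hinj hu hu' he
  · intro w hw
    obtain ⟨u, hu, rfl⟩ := Finset.mem_image.1 hw
    exact ⟨u, hu, rfl⟩
  · intro u hu
    rw [hf _ (herase_mem u hu), image_erase_injOn hinj hu]
    have hkey := key_sign φ s hnd u hu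
    rw [hkey]
    linear_combination (-(incSign s u * mapSign φ (s.erase u)
      * g ((s.image φ).erase (φ u)))) * incSign_sq (s.image φ) (φ u)

lemma fiber_sum (hcov : IsCovering φ K L) (hstrong : StrongAt φ K L n)
    {F : Finset (Fin a)} (hF : F ∈ faces K n) (H : Finset (Fin b) → ℝ) :
    ∑ s ∈ (faces K (n + 1)).filter (fun s => F ⊆ s), H (s.image φ)
      = ∑ t ∈ (faces L (n + 1)).filter (fun t => F.image φ ⊆ t), H t := by
  obtain ⟨hFK, hFc⟩ := mem_faces'.1 hF
  have hGf : F.image φ ∈ faces L n :=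
    mem_faces'.2 ⟨hcov.1 F hFK, by rw [card_image_eq hcov hFK, hFc]⟩
  refine Finset.sum_bij (fun s _ => s.image φ) ?_ ?_ ?_ (fun _ _ => rfl)
  · intro s hs
    obtain ⟨hs1, hs2⟩ := Finset.mem_filter.1 hs
    obtain ⟨hsK, hsc⟩ := mem_faces'.1 hs1
    exact Finset.mem_filter.2 ⟨mem_faces'.2 ⟨hcov.1 s hsK,
      by rw [card_image_eq hcov hsK, hsc]⟩, Finset.image_subset_image hs2⟩
  · intro s hs s' hs' he
    obtain ⟨hs1, hsub⟩ := Finset.mem_filter.1 hs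
    obtain ⟨hs1', hsub'⟩ := Finset.mem_filter.1 hs'
    by_contra hne
    have hLmem : s.image φ ∈ L := hcov.1 s (mem_faces'.1 hs1).1
    have hdisj := (hcov.2 _ hLmem).2.2 s (mem_faces'.1 hs1).1 s' (mem_faces'.1 hs1').1
      rfl he.symm hne
    have hFne : F.Nonempty := Finset.card_pos.1 (by omega)
    obtain ⟨x, hx⟩ := hFne
    exact Finset.disjoint_left.1 hdisj (hsub hx) (hsub' hx)
  · intro t ht
    obtain ⟨ht1, hsub⟩ := Finset.mem_filter.1 ht
    obtain ⟨Fb, hFb, hFsub, hFbim⟩ := hstrong t ht1 (F.image φ) hGf hsub F hF rfl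
    exact ⟨Fb, Finset.mem_filter.2 ⟨hFb, hFsub⟩, hFbim⟩

lemma normWeight_eq (hcov : IsCovering φ K L) (hstrong : StrongAt φ K L n)
    {F : Finset (Fin a)} (hF : F ∈ faces K n) :
    normWeight K n F = normWeight L n (F.image φ) := by
  obtain ⟨hFK, hFc⟩ := mem_faces'.1 hF
  rw [normWeight, normWeight, if_neg (by omega),
    if_neg (by rw [card_image_eq hcov hFK]; omega)]
  have h := fiber_sum hcov hstrong hF (fun _ => (1 : ℝ))
  simpa using h

lemma lift_eig (hK : IsComplex K) (hcov : IsCovering φ K L) (hstrong : StrongAt φ K L n)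
    (wK : Finset (Fin a) → ℝ) (wL : Finset (Fin b) → ℝ)
    (hw1 : ∀ F ∈ faces K n, wK F = wL (F.image φ))
    (hw2 : ∀ s ∈ faces K (n + 1), wK s = wL (s.image φ))
    (μ : ℝ) : IsUpEig L wL n μ → IsUpEig K wK n μ := by
  rintro ⟨g, hg0, hgsupp, hgeig⟩
  classical
  set f : Finset (Fin a) → ℝ :=
    fun E => if E ∈ faces K n then mapSign φ E * g (E.image φ) else 0 with hfdef
  have hf : ∀ E ∈ faces K n, f E = mapSign φ E * g (E.image φ) := fun E hE => if_pos hE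
  refine ⟨f, ?_, fun E hE => if_neg hE, ?_⟩
  · have hex : ∃ G, g G ≠ 0 := by
      by_contra h
      push_neg at h
      exact hg0 (funext h)
    obtain ⟨G0, hG0⟩ := hex
    have hG0f : G0 ∈ faces L n := by
      by_contra h
      exact hG0 (hgsupp _ h)
    obtain ⟨hG0L, hG0c⟩ := mem_faces'.1 hG0f
    obtain ⟨F0, hF0K, hF0im⟩ := (hcov.2 G0 hG0L).1
    have hF0c : F0.card = n + 1 := by
      rw [(hcov.2 G0 hG0L).2.1 F0 hF0K hF0im, hG0c]
    have hF0f : F0 ∈ faces K n := mem_faces'.2 ⟨hF0K, hF0c⟩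
    intro hzero
    have hv : f F0 = mapSign φ F0 * g G0 := by rw [hf _ hF0f, hF0im]
    have hne : f F0 ≠ 0 := by
      rw [hv]
      exact mul_ne_zero (mapSign_ne_zero (nodup_map_sort hcov hF0K)) hG0
    exact hne (congrFun hzero F0)
  · intro F hFf
    obtain ⟨hFK, hFc⟩ := mem_faces'.1 hFf
    have hGf : F.image φ ∈ faces L n :=
      mem_faces'.2 ⟨hcov.1 F hFK, by rw [card_image_eq hcov hFK, hFc]⟩
    have hwFG : wK F = wL (F.image φ) := hw1 F hFf
    have hfF : f F = mapSign φ F * g (F.image φ) := hf F hFf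
    have h2 := hgeig (F.image φ) hGf
    by_cases hw0 : wK F = 0
    · rw [upLap, if_pos hw0]
      rw [upLap, if_pos (hwFG ▸ hw0)] at h2
      rw [hfF, show μ * (mapSign φ F * g (F.image φ))
        = mapSign φ F * (μ * g (F.image φ)) by ring, ← h2, mul_zero]
    · have hterm : ∀ s ∈ (faces K (n + 1)).filter (fun s => F ⊆ s),
          wK s * (∑ v ∈ s \ F, incSign s v) * coboundary f s
            = mapSign φ F * (wL (s.image φ)
              * (∑ w ∈ s.image φ \ F.image φ, incSign (s.image φ) w)
              * coboundary g (s.image φ)) := by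
        intro s hs
        obtain ⟨hs1, hsub⟩ := Finset.mem_filter.1 hs
        obtain ⟨hsK, hsc⟩ := mem_faces'.1 hs1
        have hinj := injOn_simplex hcov hsK
        have hnd := nodup_map_sort hcov hsK
        have hcard1 : (s \ F).card = 1 := by
          rw [Finset.card_sdiff_of_subset hsub, hsc, hFc]
          omega
        obtain ⟨v, hv⟩ := Finset.card_eq_one.1 hcard1
        have hvmem := hv ▸ Finset.mem_singleton_self v
        have hvs : v ∈ s := (Finset.mem_sdiff.1 hvmem).1
        have hvF : v ∉ F := (Finset.mem_sdiff.1 hvmem).2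
        have hFe : F = s.erase v :=
          Finset.eq_of_subset_of_card_le (Finset.subset_erase.2 ⟨hsub, hvF⟩)
            (by rw [Finset.card_erase_of_mem hvs, hsc, hFc]; omega)
        have himv : s.image φ \ F.image φ = {φ v} := by
          have hG2 : F.image φ = (s.image φ).erase (φ v) := by
            rw [hFe, image_erase_injOn hinj hvs]
          rw [hG2]
          have hfvm : φ v ∈ s.image φ := Finset.mem_image_of_mem φ hvs
          ext w
          simp only [Finset.mem_sdiff, Finset.mem_erase, Finset.mem_singleton]
          constructor
          · rintro ⟨hw1, hw2⟩
            by_contra hne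
            exact hw2 ⟨hne, hw1⟩
          · rintro rfl
            exact ⟨hfvm, fun hc => hc.1 rfl⟩
        have hkey := key_sign φ s hnd v hvs
        rw [← hFe] at hkey
        rw [hv, Finset.sum_singleton, himv, Finset.sum_singleton,
          coboundary_pull hK hcov hs1 g f hf, hw2 s hs1, hkey]
        linear_combination (wL (s.image φ) * incSign (s.image φ) (φ v) * mapSign φ F
          * coboundary g (s.image φ)) * incSign_sq s v
      rw [upLap, if_neg hw0, Finset.sum_congr rfl hterm, ← Finset.mul_sum,
        fiber_sum hcov hstrong hFf
          (fun t => wL t * (∑ w ∈ t \ F.image φ, incSign t w) * coboundary g t)]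
      rw [upLap, if_neg (hwFG ▸ hw0)] at h2
      rw [hwFG, hfF]
      linear_combination mapSign φ F * h2

end Main

/-- **Corollary 3.12.** If `φ : K → L` is a strong covering with `L` `(n+1)`-path
connected, then (i) every eigenvalue of the combinatorial up-Laplacian `L^{up}_n(L)`
(unit weights) is an eigenvalue of `L^{up}_n(K)`, and (ii) every eigenvalue of the
normalized up-Laplacian `Δ^{up}_n(L)` is an eigenvalue of `Δ^{up}_n(K)`. -/
theorem stmt_17 {a b n : ℕ} (K : Finset (Finset (Fin a))) (L : Finset (Finset (Fin b)))
    (hK : IsComplex K) (hL : IsComplex L)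
    (φ : Fin a → Fin b) (hcov : IsCovering φ K L)
    (hstrong : ∀ d : ℕ, StrongAt φ K L d) (hconn : UpConn L n) :
    (∀ μ : ℝ, IsUpEig L (fun _ => 1) n μ → IsUpEig K (fun _ => 1) n μ) ∧
    (∀ μ : ℝ, IsUpEig L (normWeight L n) n μ → IsUpEig K (normWeight K n) n μ) := by
  refine ⟨fun μ h => lift_eig hK hcov (hstrong n) _ _ (fun _ _ => rfl) (fun _ _ => rfl) μ h,
    fun μ h => lift_eig hK hcov (hstrong n) _ _
      (fun F hF => normWeight_eq hcov (hstrong n) hF) ?_ μ h⟩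
  intro s hs
  obtain ⟨hsK, hsc⟩ := mem_faces'.1 hs
  rw [normWeight, if_pos (by omega), normWeight,
    if_pos (by rw [card_image_eq hcov hsK]; omega)]
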